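/- Let Y = Xθ* + ε with support S* = supp(θ*) of size K, let λ > 0, and suppose: (i) the restricted eigenvalue constant satisfies κ(S*,3) ≥ κ* > 0; and (ii) ‖(1/T)Xᵀε‖_∞ ≤ λ/2. Let θ̂ be any Lasso minimizer with parameter λ and Δ = θ̂ − θ*. Then: (a) (1/T)‖XΔ‖₂² ≤ 36 λ² K / κ*²; (b) ‖Δ_{S*}‖₂ ≤ 6 λ √K / κ*²; (c) ‖Δ‖₁ ≤ 24 λ K / κ*². -/

import Mathlib

open Finset

set_option maxHeartbeats 2000000 in
theorem stmt8
    (T m K : ℕ) (hT : 0 < T)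
    (X : Matrix (Fin T) (Fin m) ℝ)
    (θstar : Fin m → ℝ) (ε Y : Fin T → ℝ)
    (hY : ∀ t, Y t = (∑ j, X t j * θstar j) + ε t)
    (Sstar : Finset (Fin m)) (hSstar : ∀ j, j ∈ Sstar ↔ θstar j ≠ 0)
    (hcard : Sstar.card = K)
    (lam : ℝ) (hlam : 0 < lam)
    (κstar : ℝ) (hκ : 0 < κstar)
    -- (i) restricted eigenvalue condition: `κ(S*, 3) ≥ κ*`, i.e. `‖Xu‖₂ ≥ κ* √T ‖u_{S*}‖₂`
    -- for every `u` in the cone `‖u_{(S*)ᶜ}‖₁ ≤ 3 ‖u_{S*}‖₁`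
    (hRE : ∀ u : Fin m → ℝ,
      (∑ j ∈ Sstarᶜ, |u j|) ≤ 3 * ∑ j ∈ Sstar, |u j| →
      κstar * Real.sqrt (T : ℝ) * Real.sqrt (∑ j ∈ Sstar, u j ^ 2)
        ≤ Real.sqrt (∑ t, (∑ j, X t j * u j) ^ 2))
    -- (ii) the noise satisfies `‖(1/T) Xᵀε‖_∞ ≤ λ/2`
    (hnoise : ∀ j, |(1 / (T : ℝ)) * ∑ t, X t j * ε t| ≤ lam / 2)
    (θhat : Fin m → ℝ)
    -- `θhat` is a minimizer of the Lasso objective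
    (hmin : ∀ θ : Fin m → ℝ,
      (1 / (2 * (T : ℝ))) * (∑ t, (Y t - ∑ j, X t j * θhat j) ^ 2)
          + lam * ∑ j, |θhat j|
        ≤ (1 / (2 * (T : ℝ))) * (∑ t, (Y t - ∑ j, X t j * θ j) ^ 2)
          + lam * ∑ j, |θ j|) :
    (1 / (T : ℝ)) * (∑ t, (∑ j, X t j * (θhat j - θstar j)) ^ 2)
        ≤ 36 * lam ^ 2 * K / κstar ^ 2 ∧
    Real.sqrt (∑ j ∈ Sstar, (θhat j - θstar j) ^ 2)
        ≤ 6 * lam * Real.sqrt (K : ℝ) / κstar ^ 2 ∧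
    (∑ j, |θhat j - θstar j|) ≤ 24 * lam * K / κstar ^ 2 := by
  have htpos : (0:ℝ) < (T:ℝ) := by exact_mod_cast hT
  have htne : (T:ℝ) ≠ 0 := ne_of_gt htpos
  obtain ⟨Δ, hΔdef⟩ : ∃ Δ : Fin m → ℝ, Δ = fun j => θhat j - θstar j := ⟨_, rfl⟩
  have hΔ : ∀ j, θhat j - θstar j = Δ j := fun j => by rw [hΔdef]
  simp only [hΔ]
  obtain ⟨Q, hQdef⟩ : ∃ Q : ℝ, Q = ∑ t, (∑ j, X t j * Δ j) ^ 2 := ⟨_, rfl⟩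
  obtain ⟨a, hadef⟩ : ∃ a : ℝ, a = ∑ j ∈ Sstar, |Δ j| := ⟨_, rfl⟩
  obtain ⟨b, hbdef⟩ : ∃ b : ℝ, b = ∑ j ∈ Sstarᶜ, |Δ j| := ⟨_, rfl⟩
  obtain ⟨s, hsdef⟩ : ∃ s : ℝ, s = Real.sqrt (∑ j ∈ Sstar, (Δ j) ^ 2) := ⟨_, rfl⟩
  obtain ⟨E, hEdef⟩ : ∃ E : ℝ, E = ∑ t, ε t * (∑ j, X t j * Δ j) := ⟨_, rfl⟩
  obtain ⟨Sε, hSe⟩ : ∃ Sε : ℝ, Sε = ∑ t, (ε t)^2 := ⟨_, rfl⟩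
  obtain ⟨Nhat, hNhat⟩ : ∃ N : ℝ, N = ∑ j, |θhat j| := ⟨_, rfl⟩
  obtain ⟨Nstar, hNstar⟩ : ∃ N : ℝ, N = ∑ j, |θstar j| := ⟨_, rfl⟩
  rw [← hQdef, ← hsdef]
  have hQnn : 0 ≤ Q := hQdef ▸ Finset.sum_nonneg fun _ _ => sq_nonneg _
  have hann : 0 ≤ a := hadef ▸ Finset.sum_nonneg fun _ _ => abs_nonneg _
  have hbnn : 0 ≤ b := hbdef ▸ Finset.sum_nonneg fun _ _ => abs_nonneg _
  have hsnn : 0 ≤ s := hsdef ▸ Real.sqrt_nonneg _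
  have hKnn : (0:ℝ) ≤ (K:ℝ) := Nat.cast_nonneg K
  -- residual identity
  have hsub : ∀ t, ∑ j, X t j * Δ j
      = (∑ j, X t j * θhat j) - ∑ j, X t j * θstar j := by
    intro t
    rw [← Finset.sum_sub_distrib]
    exact Finset.sum_congr rfl fun j _ => by rw [hΔdef]; ring
  have hD : ∀ t, Y t - ∑ j, X t j * θhat j = ε t - ∑ j, X t j * Δ j := by
    intro t; rw [hY t, hsub t]; ring
  have hE0 : ∀ t, Y t - ∑ j, X t j * θstar j = ε t := by
    intro t; rw [hY t]; ring
  -- basic inequality from minimality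
  have hmin' := hmin θstar
  have hA : ∑ t, (Y t - ∑ j, X t j * θhat j)^2 = ∑ t, (ε t - ∑ j, X t j * Δ j)^2 :=
    Finset.sum_congr rfl fun t _ => by rw [hD t]
  have hB : ∑ t, (Y t - ∑ j, X t j * θstar j)^2 = Sε :=
    hSe ▸ Finset.sum_congr rfl fun t _ => by rw [hE0 t]
  rw [hA, hB, ← hNhat, ← hNstar] at hmin'
  have hexp : ∑ t, (ε t - ∑ j, X t j * Δ j) ^ 2 = Sε - 2*E + Q := by
    rw [hSe, hEdef, hQdef, Finset.mul_sum, ← Finset.sum_sub_distrib,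
      ← Finset.sum_add_distrib]
    exact Finset.sum_congr rfl fun t _ => by ring
  rw [hexp] at hmin'
  have h3 : (1 / (2 * (T:ℝ))) * (Sε - 2*E + Q)
      = (1 / (2 * (T:ℝ))) * Sε - E/(T:ℝ) + Q/(2*(T:ℝ)) := by
    field_simp
  rw [h3] at hmin'
  -- bound E/T
  have hswap : E = ∑ j, Δ j * (∑ t, X t j * ε t) := by
    rw [hEdef]
    simp only [Finset.mul_sum]
    rw [Finset.sum_comm]
    exact Finset.sum_congr rfl fun j _ =>
      Finset.sum_congr rfl fun t _ => by ring
  have hN1 : a + b = ∑ j, |Δ j| := by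
    rw [hadef, hbdef]; exact Finset.sum_add_sum_compl Sstar _
  have hEbound : E/(T:ℝ) ≤ (lam/2) * (a + b) := by
    rw [hN1]
    have h1 : E/(T:ℝ) = ∑ j, Δ j * ((1/(T:ℝ)) * (∑ t, X t j * ε t)) := by
      rw [hswap, Finset.sum_div]
      exact Finset.sum_congr rfl fun j _ => by ring
    rw [h1]
    calc ∑ j, Δ j * ((1/(T:ℝ)) * (∑ t, X t j * ε t))
        ≤ ∑ j, |Δ j| * (lam/2) := by
          refine Finset.sum_le_sum fun j _ => ?_
          calc Δ j * ((1/(T:ℝ)) * (∑ t, X t j * ε t))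
              ≤ |Δ j * ((1/(T:ℝ)) * (∑ t, X t j * ε t))| := le_abs_self _
            _ = |Δ j| * |(1/(T:ℝ)) * (∑ t, X t j * ε t)| := abs_mul _ _
            _ ≤ |Δ j| * (lam/2) :=
                mul_le_mul_of_nonneg_left (hnoise j) (abs_nonneg _)
      _ = (lam/2) * ∑ j, |Δ j| := by rw [← Finset.sum_mul, mul_comm]
  -- bound the l1 difference
  have hzero : ∀ j ∈ Sstarᶜ, θstar j = 0 := by
    intro j hj
    by_contra h
    exact (Finset.mem_compl.mp hj) ((hSstar j).mpr h)
  have hdiff : Nstar - Nhat ≤ a - b := by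
    have e1 : Nstar = ∑ j ∈ Sstar, |θstar j| := by
      rw [hNstar, ← Finset.sum_add_sum_compl Sstar (fun j => |θstar j|)]
      have : ∑ j ∈ Sstarᶜ, |θstar j| = 0 :=
        Finset.sum_eq_zero fun j hj => by rw [hzero j hj, abs_zero]
      rw [this, add_zero]
    have e2 : Nhat = (∑ j ∈ Sstar, |θhat j|) + b := by
      rw [hNhat, hbdef, ← Finset.sum_add_sum_compl Sstar (fun j => |θhat j|)]
      congr 1
      exact Finset.sum_congr rfl fun j hj => by
        rw [hΔdef]; simp [hzero j hj]
    have e3 : ∑ j ∈ Sstar, (|θstar j| - |θhat j|) ≤ a := by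
      rw [hadef]
      refine Finset.sum_le_sum fun j _ => ?_
      calc |θstar j| - |θhat j| ≤ |θstar j - θhat j| := abs_sub_abs_le_abs_sub _ _
        _ = |Δ j| := by rw [abs_sub_comm, hΔdef]
    have e4 := Finset.sum_sub_distrib (s := Sstar)
      (f := fun j => |θstar j|) (g := fun j => |θhat j|)
    rw [e1, e2]
    linarith [e3, e4.le, e4.ge]
  -- the key inequality
  have key : Q/(2*(T:ℝ)) ≤ 3/2*(lam*a) - 1/2*(lam*b) := by
    have hm1 : lam*(Nstar - Nhat) ≤ lam*(a-b) :=
      mul_le_mul_of_nonneg_left hdiff hlam.le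
    linarith [hmin', hEbound, hm1]
  have hQ2nn : 0 ≤ Q/(2*(T:ℝ)) := div_nonneg hQnn (by positivity)
  have hcone' : lam * b ≤ lam * (3*a) := by linarith [key, hQ2nn]
  have hcone : b ≤ 3*a := (mul_le_mul_iff_right₀ hlam).mp hcone'
  have hQ3 : Q/(T:ℝ) ≤ 3*(lam*a) := by
    have h2 : Q/(T:ℝ) = 2*(Q/(2*(T:ℝ))) := by field_simp
    rw [h2]
    linarith [key, mul_nonneg hlam.le hbnn]
  -- Cauchy-Schwarz
  have hcs : a^2 ≤ (K:ℝ) * (∑ j ∈ Sstar, (Δ j)^2) := by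
    have h := Finset.sum_mul_sq_le_sq_mul_sq Sstar (fun _ => (1:ℝ)) (fun j => |Δ j|)
    simp only [one_mul, one_pow, sq_abs, Finset.sum_const, nsmul_eq_mul, mul_one,
      hcard] at h
    rw [hadef]
    exact h
  have has : a ≤ Real.sqrt (K:ℝ) * s := by
    rw [hsdef]
    calc a = Real.sqrt (a^2) := (Real.sqrt_sq hann).symm
      _ ≤ Real.sqrt ((K:ℝ) * (∑ j ∈ Sstar, (Δ j)^2)) := Real.sqrt_le_sqrt hcs
      _ = Real.sqrt (K:ℝ) * Real.sqrt (∑ j ∈ Sstar, (Δ j)^2) := Real.sqrt_mul hKnn _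
  -- restricted eigenvalue
  have hre : κstar * Real.sqrt (T:ℝ) * s ≤ Real.sqrt Q := by
    rw [hsdef, hQdef]
    apply hRE Δ
    rw [← hadef, ← hbdef]
    exact hcone
  obtain ⟨r, hrdef⟩ : ∃ r : ℝ, r = Real.sqrt (Q/(T:ℝ)) := ⟨_, rfl⟩
  have hrnn : 0 ≤ r := hrdef ▸ Real.sqrt_nonneg _
  have hr2 : r^2 = Q/(T:ℝ) := by
    rw [hrdef]; exact Real.sq_sqrt (div_nonneg hQnn htpos.le)
  have hQsplit : Real.sqrt Q = Real.sqrt (T:ℝ) * r := by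
    rw [hrdef, ← Real.sqrt_mul htpos.le]
    congr 1
    field_simp
  have hκs : κstar * s ≤ r := by
    have hsT : 0 < Real.sqrt (T:ℝ) := Real.sqrt_pos.mpr htpos
    have h : Real.sqrt (T:ℝ) * (κstar * s) ≤ Real.sqrt (T:ℝ) * r := by
      rw [← hQsplit]
      calc Real.sqrt (T:ℝ) * (κstar * s) = κstar * Real.sqrt (T:ℝ) * s := by ring
        _ ≤ Real.sqrt Q := hre
    exact le_of_mul_le_mul_left h hsT
  have hrr : κstar * r ≤ 3 * lam * Real.sqrt (K:ℝ) := by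
    have hQr : r^2 ≤ 3 * lam * (Real.sqrt (K:ℝ) * s) := by
      rw [hr2]
      calc Q/(T:ℝ) ≤ 3*(lam*a) := hQ3
        _ ≤ 3 * lam * (Real.sqrt (K:ℝ) * s) := by
            have := mul_le_mul_of_nonneg_left has hlam.le
            linarith
    rcases eq_or_lt_of_le hrnn with h0 | hpos
    · rw [← h0, mul_zero]; positivity
    · have hmul : (κstar * r) * r ≤ (3 * lam * Real.sqrt (K:ℝ)) * r := by
        have p1 : κstar * r^2 ≤ κstar * (3 * lam * (Real.sqrt (K:ℝ) * s)) :=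
          mul_le_mul_of_nonneg_left hQr hκ.le
        have p2 : (3 * lam * Real.sqrt (K:ℝ)) * (κstar * s)
            ≤ (3 * lam * Real.sqrt (K:ℝ)) * r :=
          mul_le_mul_of_nonneg_left hκs (by positivity)
        linarith [p1, p2]
      exact le_of_mul_le_mul_right hmul hpos
  have hKsq : (Real.sqrt (K:ℝ))^2 = (K:ℝ) := Real.sq_sqrt hKnn
  have hs3 : κstar^2 * s ≤ 3 * lam * Real.sqrt (K:ℝ) := by
    have p1 : κstar * (κstar * s) ≤ κstar * r := mul_le_mul_of_nonneg_left hκs hκ.le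
    linarith [p1, hrr]
  have hsb : s ≤ 3 * lam * Real.sqrt (K:ℝ) / κstar^2 := by
    rw [le_div_iff₀ (by positivity)]
    linarith [hs3]
  refine ⟨?_, ?_, ?_⟩
  · -- (a)
    have h1 : (1/(T:ℝ)) * Q = r^2 := by rw [hr2]; ring
    rw [h1]
    have h2 : r^2 ≤ (3 * lam * Real.sqrt (K:ℝ))^2 / κstar^2 := by
      rw [le_div_iff₀ (by positivity)]
      have := pow_le_pow_left₀ (mul_nonneg hκ.le hrnn) hrr 2
      linarith [this]
    calc r^2 ≤ (3 * lam * Real.sqrt (K:ℝ))^2 / κstar^2 := h2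
      _ = 9 * lam^2 * (K:ℝ) / κstar^2 := by rw [mul_pow, mul_pow, hKsq]; ring_nf
      _ ≤ 36 * lam^2 * (K:ℝ) / κstar^2 := by
          apply div_le_div_of_nonneg_right ?_ (by positivity)
          linarith [mul_nonneg (sq_nonneg lam) hKnn]
  · -- (b)
    calc s ≤ 3 * lam * Real.sqrt (K:ℝ) / κstar^2 := hsb
      _ ≤ 6 * lam * Real.sqrt (K:ℝ) / κstar^2 := by
          apply div_le_div_of_nonneg_right ?_ (by positivity)
          linarith [mul_nonneg hlam.le (Real.sqrt_nonneg (K:ℝ))]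
  · -- (c)
    rw [← hN1]
    have h4 : a + b ≤ 4*a := by linarith [hcone]
    have h5 : a ≤ Real.sqrt (K:ℝ) * (3 * lam * Real.sqrt (K:ℝ) / κstar^2) := by
      calc a ≤ Real.sqrt (K:ℝ) * s := has
        _ ≤ _ := mul_le_mul_of_nonneg_left hsb (Real.sqrt_nonneg _)
    have h6 : Real.sqrt (K:ℝ) * (3 * lam * Real.sqrt (K:ℝ) / κstar^2)
        = 3 * lam * (K:ℝ) / κstar^2 := by
      rw [mul_div_assoc']
      congr 1
      linear_combination 3 * lam * hKsq
    have h7 : 12 * lam * (K:ℝ) / κstar^2 ≤ 24 * lam * (K:ℝ) / κstar^2 := by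
      apply div_le_div_of_nonneg_right ?_ (by positivity)
      linarith [mul_nonneg hlam.le hKnn]
    rw [h6] at h5
    calc a + b ≤ 4*a := h4
      _ ≤ 4 * (3 * lam * (K:ℝ) / κstar^2) := by linarith
      _ = 12 * lam * (K:ℝ) / κstar^2 := by ring
      _ ≤ 24 * lam * (K:ℝ) / κstar^2 := h7
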